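/- For any nonnegative integer n and all r, k > 0, the n-th partial derivative in r of G(r,k) = sin(kr)/r satisfies |∂ⁿ/∂rⁿ (sin(kr)/r)| ≤ kⁿ⁺¹/(n+1). -/

import Mathlib

open Real MeasureTheory intervalIntegral

noncomputable def Fi (k : ℝ) (n : ℕ) (r : ℝ) : ℝ :=
  ∫ t in (0:ℝ)..k, t ^ n * Real.cos (t * r + n * (π / 2))

lemma hasDerivAt_inner (t : ℝ) (n : ℕ) (x : ℝ) :
    HasDerivAt (fun x => t ^ n * Real.cos (t * x + n * (π / 2)))
      (t ^ (n + 1) * Real.cos (t * x + (n + 1 : ℕ) * (π / 2))) x := by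
  have h1 : HasDerivAt (fun x : ℝ => t * x + n * (π / 2)) t x := by
    simpa using ((hasDerivAt_id x).const_mul t).add_const (n * (π / 2))
  have h2 := (Real.hasDerivAt_cos (t * x + n * (π / 2))).comp x h1
  have h3 := h2.const_mul (t ^ n)
  refine h3.congr_deriv ?_
  push_cast
  rw [show ((n : ℝ) + 1) * (π / 2) = (t * x + n * (π / 2) + π / 2) - (t * x) by ring]
  rw [show t * x + (t * x + ↑n * (π / 2) + π / 2 - t * x) = t * x + n * (π / 2) + π / 2 by ring]
  rw [Real.cos_add_pi_div_two]
  ring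

lemma hasDerivAt_Fi (k : ℝ) (n : ℕ) (x₀ : ℝ) :
    HasDerivAt (Fi k n) (Fi k (n + 1) x₀) x₀ := by
  have cont : ∀ (m : ℕ) (x : ℝ),
      Continuous (fun t : ℝ => t ^ m * Real.cos (t * x + m * (π / 2))) := by
    intro m x
    fun_prop
  refine (intervalIntegral.hasDerivAt_integral_of_dominated_loc_of_deriv_le
    (F := fun x t => t ^ n * Real.cos (t * x + n * (π / 2)))
    (F' := fun x t => t ^ (n + 1) * Real.cos (t * x + (n + 1 : ℕ) * (π / 2)))
    (bound := fun t => |t| ^ (n + 1)) (μ := volume) (a := 0) (b := k) (x₀ := x₀)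
    (Metric.ball_mem_nhds x₀ one_pos) ?_ ?_ ?_ ?_ ?_ ?_).2
  · filter_upwards with x
    exact (cont n x).aestronglyMeasurable
  · exact (cont n x₀).intervalIntegrable 0 k
  · exact (cont (n + 1) x₀).aestronglyMeasurable
  · filter_upwards with t ht x hx
    rw [Real.norm_eq_abs, abs_mul, abs_pow]
    calc |t| ^ (n + 1) * |Real.cos (t * x + (n + 1 : ℕ) * (π / 2))|
        ≤ |t| ^ (n + 1) * 1 := by
          gcongr
          exact Real.abs_cos_le_one _
      _ = |t| ^ (n + 1) := mul_one _
  · exact (continuous_abs.pow (n + 1)).intervalIntegrable 0 k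
  · filter_upwards with t ht x hx
    exact hasDerivAt_inner t n x

lemma iteratedDeriv_Fi (k : ℝ) (n : ℕ) : iteratedDeriv n (Fi k 0) = Fi k n := by
  induction n with
  | zero => simp [iteratedDeriv_zero]
  | succ m ih =>
    funext x
    rw [iteratedDeriv_succ, ih]
    exact (hasDerivAt_Fi k m x).deriv

lemma Fi_zero_eq (k x : ℝ) (hx : x ≠ 0) : Fi k 0 x = Real.sin (k * x) / x := by
  unfold Fi
  simp only [pow_zero, Nat.cast_zero, zero_mul, add_zero, one_mul]
  rw [intervalIntegral.integral_comp_mul_right Real.cos hx]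
  rw [integral_cos]
  simp [div_eq_inv_mul, Real.sin_zero]

/-- For every `n : ℕ` and all `r, k > 0`, the `n`-th derivative in `r` of
`G(r,k) = sin(kr)/r` satisfies `|∂ⁿG/∂rⁿ| ≤ kⁿ⁺¹/(n+1)`. -/
theorem stmt1 (k : ℝ) (hk : 0 < k) (n : ℕ) (r : ℝ) (hr : 0 < r) :
    |iteratedDeriv n (fun x : ℝ => Real.sin (k * x) / x) r| ≤ k ^ (n + 1) / (n + 1) := by
  have heq : (fun x : ℝ => Real.sin (k * x) / x) =ᶠ[nhds r] Fi k 0 := by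
    filter_upwards [IsOpen.mem_nhds isOpen_Ioi hr] with x hx
    exact (Fi_zero_eq k x (ne_of_gt hx)).symm
  rw [heq.iteratedDeriv_eq n, iteratedDeriv_Fi]
  have h1 : ‖∫ t in (0:ℝ)..k, t ^ n * Real.cos (t * r + n * (π / 2))‖
      ≤ |∫ t in (0:ℝ)..k, t ^ n| := by
    apply intervalIntegral.norm_integral_le_abs_of_norm_le
    · filter_upwards [ae_restrict_mem measurableSet_uIoc] with t ht
      rw [Set.uIoc_of_le hk.le] at ht
      rw [Real.norm_eq_abs, abs_mul, abs_pow, abs_of_pos ht.1]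
      calc t ^ n * |Real.cos (t * r + n * (π / 2))| ≤ t ^ n * 1 := by
            gcongr
            · exact pow_nonneg ht.1.le n
            · exact Real.abs_cos_le_one _
        _ = t ^ n := mul_one _
    · exact (continuous_pow n).intervalIntegrable 0 k
  rw [Real.norm_eq_abs] at h1
  calc |Fi k n r| ≤ |∫ t in (0:ℝ)..k, t ^ n| := h1
    _ = k ^ (n + 1) / (n + 1) := by
        rw [integral_pow, zero_pow (Nat.succ_ne_zero n), sub_zero, abs_of_nonneg (by positivity)]
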